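/- (Core of the main theorem, the r-spin Givental field.) Fix integers r ≥ 2 and d ≥ 1, and let V = H ⊗ ℚ^{r−1} carry the tensor-product bilinear form of g on H and the form g(e_a, e_b) = δ_{a+b,r} on ℚ^{r−1}. Then the operator of multiplication by (z^d/(d+1)!) · Id_H ⊗ diag[ B_{d+1}(1/r), …, B_{d+1}((r−1)/r) ] is an infinitesimal symplectic transformation of 𝒱 = V((z⁻¹)) with respect to Givental's form ω: denoting this operator by T, one has ω(Tf₁, f₂) + ω(f₁, Tf₂) = 0 for all f₁, f₂ ∈ 𝒱. -/
import Mathlib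


noncomputable section

open scoped TensorProduct

/-- `f : ℤ → V` has coefficients vanishing for all sufficiently large `k`
(finitely many positive powers of `z`). -/
def IsGivental {V : Type*} [AddCommGroup V] [Module ℚ V] (f : ℤ → V) : Prop :=
  ∃ N : ℤ, ∀ k : ℤ, N < k → f k = 0

/-- Givental's symplectic form `ω(f₁, f₂) = Σ_{k∈ℤ} (−1)^k g(f₁_k, f₂_(-1-k))`. -/
def giventalForm {V : Type*} [AddCommGroup V] [Module ℚ V]
    (g : V →ₗ[ℚ] V →ₗ[ℚ] ℚ) (f₁ f₂ : ℤ → V) : ℚ :=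
  ∑ᶠ k : ℤ, (-1 : ℚ) ^ k * g (f₁ k) (f₂ (-1 - k))

/-- The bilinear form on `ℚ^{r−1}` given by `g(e_a, e_b) = δ_{a+b,r}`, as a bilinear map
(the index `i : Fin (r-1)` corresponds to `m = i + 1`). -/
def spinPairing (r : ℕ) : (Fin (r - 1) → ℚ) →ₗ[ℚ] (Fin (r - 1) → ℚ) →ₗ[ℚ] ℚ :=
  Matrix.toLinearMap₂' ℚ
    (Matrix.of fun i j : Fin (r - 1) =>
      if (i : ℕ) + 1 + ((j : ℕ) + 1) = r then (1 : ℚ) else 0)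

/-- The diagonal operator `diag[B_{d+1}(1/r), …, B_{d+1}((r−1)/r)]` on `ℚ^{r−1}`. -/
def bernoulliDiag (r d : ℕ) : (Fin (r - 1) → ℚ) →ₗ[ℚ] (Fin (r - 1) → ℚ) :=
  LinearMap.pi fun i =>
    ((Polynomial.bernoulli (d + 1)).eval ((((i : ℕ) : ℚ) + 1) / r)) • LinearMap.proj i

/-- The operator of multiplication by
`(z^d/(d+1)!) · Id_H ⊗ diag[B_{d+1}(1/r), …, B_{d+1}((r−1)/r)]`
on `𝒱 = (H ⊗ ℚ^{r−1})((z⁻¹))`. -/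
def rspinField {H : Type*} [AddCommGroup H] [Module ℚ H] (r d : ℕ)
    (f : ℤ → H ⊗[ℚ] (Fin (r - 1) → ℚ)) : ℤ → H ⊗[ℚ] (Fin (r - 1) → ℚ) :=
  fun k => ((Nat.factorial (d + 1) : ℚ))⁻¹ •
    (TensorProduct.map LinearMap.id (bernoulliDiag r d)) (f (k - d))

open Polynomial in
/-- Reflection identity for Bernoulli polynomials: `B_n(1 - X) = (-1)^n B_n(X)`. -/
lemma bern_reflect (n : ℕ) :
    (Polynomial.bernoulli n).comp (1 - X) = (-1 : ℚ) ^ n • Polynomial.bernoulli n := by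
  induction n with
  | zero => simp [Polynomial.bernoulli_zero]
  | succ n ih =>
    set F : ℚ[X] := (Polynomial.bernoulli (n+1)).comp (1 - X)
      - (-1:ℚ)^(n+1) • Polynomial.bernoulli (n+1) with hFdef
    have hder : derivative F = 0 := by
      rw [hFdef, derivative_sub, derivative_comp, Polynomial.derivative_bernoulli_add_one,
        derivative_smul, Polynomial.derivative_bernoulli_add_one]
      simp only [derivative_sub, derivative_one, derivative_X, zero_sub, mul_comp, natCast_comp,
        one_comp, add_comp, ih, smul_eq_C_mul, pow_succ]
      simp only [map_mul, map_pow, map_neg, map_one]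
      ring
    have hC := Polynomial.eq_C_of_derivative_eq_zero hder
    have h0 : F.eval 0 = 0 := by
      simp only [hFdef, eval_sub, eval_comp, eval_one, eval_X, sub_zero, eval_smul,
        Polynomial.bernoulli_eval_one, Polynomial.bernoulli_eval_zero, smul_eq_mul]
      rw [bernoulli'_eq_bernoulli]
      ring
    rw [Polynomial.coeff_zero_eq_eval_zero, h0, map_zero] at hC
    exact sub_eq_zero.mp hC

lemma bern_reflect_eval (n : ℕ) (t : ℚ) :
    (Polynomial.bernoulli n).eval (1 - t) = (-1 : ℚ) ^ n * (Polynomial.bernoulli n).eval t := by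
  have := congrArg (Polynomial.eval t) (bern_reflect n)
  simpa [Polynomial.eval_comp] using this

/-- Anti-self-adjointness (up to sign `(-1)^{d+1}`) of the Bernoulli diagonal operator
with respect to the spin pairing. -/
lemma spin_key (r d : ℕ) (hr : 2 ≤ r) (x y : Fin (r - 1) → ℚ) :
    spinPairing r (bernoulliDiag r d x) y
      = (-1 : ℚ) ^ (d + 1) * spinPairing r x (bernoulliDiag r d y) := by
  simp only [spinPairing, Matrix.toLinearMap₂'_apply, bernoulliDiag, LinearMap.pi_apply,
    LinearMap.smul_apply, LinearMap.proj_apply, Matrix.of_apply, smul_eq_mul, Finset.mul_sum]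
  refine Finset.sum_congr rfl fun i _ => Finset.sum_congr rfl fun j _ => ?_
  by_cases h : (i : ℕ) + 1 + ((j : ℕ) + 1) = r
  · simp only [h, if_pos rfl, if_true]
    have hr0 : (r : ℚ) ≠ 0 := by positivity
    have hx : (((i : ℕ) : ℚ) + 1) / r = 1 - ((((j : ℕ) : ℚ) + 1) / r) := by
      field_simp
      have : ((i : ℕ) : ℚ) + 1 + (((j : ℕ) : ℚ) + 1) = r := by
        exact_mod_cast congrArg Nat.cast h
      linarith
    rw [hx, bern_reflect_eval]
    ring
  · simp [h]

/-- The tensor-product version of `spin_key`. -/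
lemma tensor_key {H : Type*} [AddCommGroup H] [Module ℚ H]
    (g : H →ₗ[ℚ] H →ₗ[ℚ] ℚ) (r d : ℕ) (hr : 2 ≤ r)
    (u v : H ⊗[ℚ] (Fin (r - 1) → ℚ)) :
    LinearMap.BilinForm.tmul g (spinPairing r)
        (TensorProduct.map LinearMap.id (bernoulliDiag r d) u) v
      = (-1 : ℚ) ^ (d + 1) *
        LinearMap.BilinForm.tmul g (spinPairing r) u
          (TensorProduct.map LinearMap.id (bernoulliDiag r d) v) := by
  induction u using TensorProduct.induction_on with
  | zero => simp
  | tmul a b =>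
    induction v using TensorProduct.induction_on with
    | zero => simp
    | tmul c e =>
      simp only [TensorProduct.map_tmul, LinearMap.id_coe, id_eq,
        LinearMap.BilinForm.tensorDistrib_tmul, smul_eq_mul]
      rw [spin_key r d hr]
      ring
    | add v₁ v₂ h1 h2 =>
      simp only [map_add, h1, h2]
      ring
  | add u₁ u₂ h1 h2 =>
    simp only [map_add, LinearMap.add_apply, h1, h2]
    ring

/-- The r-spin Givental field is an infinitesimal symplectic transformation of
`𝒱 = (H ⊗ ℚ^{r−1})((z⁻¹))` with respect to Givental's form built from the
tensor-product bilinear form. -/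
theorem rspinField_infinitesimally_symplectic {H : Type*} [AddCommGroup H] [Module ℚ H]
    [FiniteDimensional ℚ H]
    (g : H →ₗ[ℚ] H →ₗ[ℚ] ℚ)
    (hsymm : ∀ u v : H, g u v = g v u)
    (hnondeg : ∀ u : H, (∀ v : H, g u v = 0) → u = 0)
    (r d : ℕ) (hr : 2 ≤ r) (hd : 1 ≤ d)
    (f₁ f₂ : ℤ → H ⊗[ℚ] (Fin (r - 1) → ℚ))
    (hf₁ : IsGivental f₁) (hf₂ : IsGivental f₂) :
    giventalForm (LinearMap.BilinForm.tmul g (spinPairing r)) (rspinField r d f₁) f₂ +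
      giventalForm (LinearMap.BilinForm.tmul g (spinPairing r)) f₁ (rspinField r d f₂) = 0 := by
  set G := LinearMap.BilinForm.tmul g (spinPairing r) with hG
  have key : giventalForm G (rspinField r d f₁) f₂
      = - giventalForm G f₁ (rspinField r d f₂) := by
    unfold giventalForm
    rw [← finsum_comp_equiv (Equiv.addRight (d : ℤ))]
    rw [show (- ∑ᶠ k : ℤ, (-1:ℚ) ^ k * G (f₁ k) (rspinField r d f₂ (-1 - k)))
        = ∑ᶠ k : ℤ, -((-1:ℚ) ^ k * G (f₁ k) (rspinField r d f₂ (-1 - k))) from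
      ((AddEquiv.neg ℚ).map_finsum _)]
    refine finsum_congr fun k => ?_
    simp only [Equiv.coe_addRight, rspinField]
    have harg : k + (d : ℤ) - d = k := by ring
    have harg2 : -1 - (k + (d : ℤ)) = -1 - k - d := by ring
    rw [harg, harg2]
    have hz : ((-1 : ℚ)) ^ (k + (d : ℤ)) = (-1:ℚ) ^ k * (-1:ℚ) ^ (d : ℕ) := by
      rw [zpow_add₀ (by norm_num : (-1:ℚ) ≠ 0), zpow_natCast]
    rw [hz]
    simp only [map_smul, LinearMap.smul_apply, smul_eq_mul]
    rw [hG] at *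
    rw [tensor_key g r d hr]
    have hsq : ((-1:ℚ)) ^ (d * 2) = 1 := by
      rw [mul_comm, pow_mul]
      norm_num
    ring_nf
    rw [hsq, mul_one]
  rw [key]
  ring
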